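/- Let R be a commutative ring, m ≥ 1, and λ, c : Fin m → R. Define the m×m matrix D over R by D i j = (if i = j then λ i else 0) + 1 + c i * c j. Then det D = (∏_{k} λ k) + ∑_{i} (1 + (c i)^2) * ∏_{j ≠ i} λ j + ∑_{i < j} (c i − c j)^2 * ∏_{k ∉ {i,j}} λ k, where the last sum is over all pairs i < j in Fin m. -/

import Mathlib

open Finset Matrix

section helpers
variable {R : Type*} [CommRing R] {n : Type*} [DecidableEq n] [Fintype n]

lemma my_det_updateRow_one (i : n) (v : n → R) :
    ((1 : Matrix n n R).updateRow i v).det = v i := by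
  have hv : v = ∑ k, v k • (1 : Matrix n n R) k := by
    ext j
    simp [Matrix.one_apply]
  calc ((1 : Matrix n n R).updateRow i v).det
      = ((1 : Matrix n n R).updateRow i (∑ k, v k • (1 : Matrix n n R) k)).det := by rw [← hv]
    _ = v i • (1 : Matrix n n R).det := Matrix.det_updateRow_sum _ _ _
    _ = v i := by simp

lemma my_det_updateRow_sum_vec (A : Matrix n n R) (i : n)
    {α : Type*} (s : Finset α) (v : α → n → R) :
    (A.updateRow i (∑ k ∈ s, v k)).det = ∑ k ∈ s, (A.updateRow i (v k)).det := by
  classical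
  induction s using Finset.induction_on with
  | empty =>
      simp only [Finset.sum_empty]
      exact Matrix.det_eq_zero_of_row_eq_zero i (fun j => by simp)
  | insert _ _ h ih =>
      rw [Finset.sum_insert h, Matrix.det_updateRow_add, ih, Finset.sum_insert h]

-- det of identity with rows i ↦ e_j, j ↦ e_i : the swap permutation matrix
lemma my_det_swap_rows (i j : n) (hij : i ≠ j) :
    (((1 : Matrix n n R).updateRow j (Pi.single i (1:R))).updateRow i
      (Pi.single j (1:R))).det = -1 := by
  have hperm : ((1 : Matrix n n R).updateRow j (Pi.single i (1:R))).updateRow i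
      (Pi.single j (1:R)) = (1 : Matrix n n R).submatrix (Equiv.swap i j) id := by
    ext a b
    by_cases ha : a = i
    · subst a
      rw [Matrix.updateRow_self]
      simp [Matrix.submatrix, Equiv.swap_apply_left, Matrix.one_apply, Pi.single_apply, eq_comm]
    · rw [Matrix.updateRow_ne ha]
      by_cases ha2 : a = j
      · subst a
        rw [Matrix.updateRow_self]
        simp [Matrix.submatrix, Equiv.swap_apply_right, Matrix.one_apply, Pi.single_apply,
          eq_comm]
      · rw [Matrix.updateRow_ne ha2]
        simp [Matrix.submatrix, Equiv.swap_apply_of_ne_of_ne ha ha2, Matrix.one_apply]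
  rw [hperm, Matrix.det_permute]
  simp [Equiv.Perm.sign_swap hij]

-- determinant of identity with rows i,j replaced by u,v (i ≠ j)
lemma my_det_two_rows (i j : n) (hij : i ≠ j) (u v : n → R) :
    (((1 : Matrix n n R).updateRow i u).updateRow j v).det
      = u i * v j - u j * v i := by
  have hvsum : v = ∑ l, v l • (Pi.single l (1:R) : n → R) := by
    ext j'
    simp [Pi.single_apply]
  have step : (((1 : Matrix n n R).updateRow i u).updateRow j v) =
      (((1 : Matrix n n R).updateRow i u).updateRow j
      (∑ l, v l • (Pi.single l (1:R) : n → R))) := by rw [← hvsum]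
  rw [step, my_det_updateRow_sum_vec]
  have hterm : ∀ l : n, ((((1 : Matrix n n R).updateRow i u).updateRow j
      (v l • (Pi.single l (1:R) : n → R))).det)
      = v l * (((1 : Matrix n n R).updateRow i u).updateRow j
          (Pi.single l (1:R) : n → R)).det := fun l => Matrix.det_updateRow_smul _ _ _ _
  simp only [hterm]
  have hval : ∀ l : n, (((1 : Matrix n n R).updateRow i u).updateRow j
      (Pi.single l (1:R) : n → R)).det
      = if l = j then u i else if l = i then - u j else 0 := by
    intro l
    by_cases hlj : l = j
    · subst l
      rw [if_pos rfl]
      have heq : ((1 : Matrix n n R).updateRow i u).updateRow j (Pi.single j (1:R)) =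
          (1 : Matrix n n R).updateRow i u := by
        ext k j'
        by_cases hk : k = j
        · subst k
          rw [Matrix.updateRow_self, Matrix.updateRow_ne (Ne.symm hij), Matrix.one_apply,
            Pi.single_apply]
          simp [eq_comm]
        · rw [Matrix.updateRow_ne hk]
      rw [heq, my_det_updateRow_one]
    · rw [if_neg hlj]
      by_cases hli : l = i
      · subst l
        rw [if_pos rfl]
        -- rows: i ↦ u, j ↦ e_i. expand u.
        have hcomm : ((1 : Matrix n n R).updateRow i u).updateRow j (Pi.single i (1:R)) =
            ((1 : Matrix n n R).updateRow j (Pi.single i (1:R))).updateRow i u := by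
          ext k j'
          by_cases hk : k = i
          · subst k
            rw [Matrix.updateRow_ne hij, Matrix.updateRow_self, Matrix.updateRow_self]
          · rw [Matrix.updateRow_ne hk]
            by_cases hk2 : k = j
            · subst k
              rw [Matrix.updateRow_self, Matrix.updateRow_self]
            · rw [Matrix.updateRow_ne hk2, Matrix.updateRow_ne hk2, Matrix.updateRow_ne hk]
        rw [hcomm]
        have husum : u = ∑ k, u k • (Pi.single k (1:R) : n → R) := by
          ext j'
          simp [Pi.single_apply]
        have step2 : ((1 : Matrix n n R).updateRow j (Pi.single i (1:R))).updateRow i u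
            = ((1 : Matrix n n R).updateRow j (Pi.single i (1:R))).updateRow i
              (∑ k, u k • (Pi.single k (1:R) : n → R)) := by rw [← husum]
        rw [step2, my_det_updateRow_sum_vec]
        have hterm2 : ∀ k : n, (((1 : Matrix n n R).updateRow j
            (Pi.single i (1:R))).updateRow i (u k • (Pi.single k (1:R) : n → R))).det
            = u k * (((1 : Matrix n n R).updateRow j (Pi.single i (1:R))).updateRow i
              (Pi.single k (1:R) : n → R)).det := fun k => Matrix.det_updateRow_smul _ _ _ _
        simp only [hterm2]
        have hval2 : ∀ k : n, (((1 : Matrix n n R).updateRow j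
            (Pi.single i (1:R))).updateRow i (Pi.single k (1:R) : n → R)).det
            = if k = j then (-1 : R) else 0 := by
          intro k
          by_cases hkj : k = j
          · subst k
            rw [if_pos rfl]
            exact my_det_swap_rows i j hij
          · rw [if_neg hkj]
            by_cases hki : k = i
            · subst k
              apply Matrix.det_zero_of_row_eq hij
              rw [Matrix.updateRow_self, Matrix.updateRow_ne (Ne.symm hij),
                Matrix.updateRow_self]
            · apply Matrix.det_zero_of_row_eq (Ne.symm hki)
              rw [Matrix.updateRow_self, Matrix.updateRow_ne hki, Matrix.updateRow_ne hkj]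
              ext b
              simp [Matrix.one_apply, Pi.single_apply, eq_comm]
        simp only [hval2]
        rw [Finset.sum_eq_single j]
        · simp
        · intro k _ hk; simp [hk]
        · intro h; exact absurd (Finset.mem_univ j) h
      · rw [if_neg hli]
        have hrr : (((1 : Matrix n n R).updateRow i u).updateRow j (Pi.single l (1:R))) l
            = (((1 : Matrix n n R).updateRow i u).updateRow j (Pi.single l (1:R))) j := by
          rw [Matrix.updateRow_self, Matrix.updateRow_ne hlj, Matrix.updateRow_ne hli]
          ext b
          simp [Matrix.one_apply, Pi.single_apply, eq_comm]
        exact Matrix.det_zero_of_row_eq hlj hrr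
  simp only [hval]
  rw [Finset.sum_eq_add_of_mem j i (Finset.mem_univ j) (Finset.mem_univ i) (Ne.symm hij)]
  · simp [hij, Ne.symm hij]
    ring
  · intro k _ hk
    simp [hk.1, hk.2]

end helpers


section helpers2
variable {R : Type*} [CommRing R] {n : Type*} [DecidableEq n] [Fintype n]

lemma my_updateRow_comm (A : Matrix n n R) {i j : n} (hij : i ≠ j) (u v : n → R) :
    (A.updateRow i u).updateRow j v = (A.updateRow j v).updateRow i u := by
  ext k j'
  by_cases hk : k = j
  · subst k
    rw [Matrix.updateRow_self, Matrix.updateRow_ne (Ne.symm hij), Matrix.updateRow_self]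
  · rw [Matrix.updateRow_ne hk]
    by_cases hk2 : k = i
    · subst k
      rw [Matrix.updateRow_self, Matrix.updateRow_self]
    · rw [Matrix.updateRow_ne hk2, Matrix.updateRow_ne hk2, Matrix.updateRow_ne hk]

end helpers2

section mt
variable {R : Type*} [CommRing R] {m : ℕ}

/-- rows of `B`: `b i j = 1 + c i * c j` -/
def myB (c : Fin m → R) : Fin m → Fin m → R := fun i j => 1 + c i * c j

/-- matrix with unit rows outside `t` and `B`-rows on `t` -/
def myM (c : Fin m → R) (t : Finset (Fin m)) : Matrix (Fin m) (Fin m) R :=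
  Matrix.of (tᶜ.piecewise (fun i => Pi.single i 1) (myB c))

lemma myM_row_mem (c : Fin m → R) {t : Finset (Fin m)} {i : Fin m} (hi : i ∈ t) :
    myM c t i = myB c i := by
  have : i ∉ tᶜ := by simp [hi]
  show (tᶜ.piecewise (fun i => Pi.single i 1) (myB c)) i = myB c i
  exact Finset.piecewise_eq_of_notMem _ _ _ this

lemma myM_row_not_mem (c : Fin m → R) {t : Finset (Fin m)} {i : Fin m} (hi : i ∉ t) :
    myM c t i = Pi.single i 1 := by
  have : i ∈ tᶜ := by simp [hi]
  show (tᶜ.piecewise (fun i => Pi.single i 1) (myB c)) i = Pi.single i 1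
  exact Finset.piecewise_eq_of_mem _ _ _ this

lemma myM_empty (c : Fin m → R) : (myM c ∅).det = 1 := by
  have : myM c ∅ = (1 : Matrix (Fin m) (Fin m) R) := by
    ext i j
    rw [show (myM c ∅) i j = (Pi.single i 1 : Fin m → R) j from
      congrFun (myM_row_not_mem c (Finset.notMem_empty i)) j]
    simp [Matrix.one_apply, Pi.single_apply, eq_comm]
  rw [this, Matrix.det_one]

lemma myM_single (c : Fin m → R) (i : Fin m) : (myM c {i}).det = 1 + c i ^ 2 := by
  have heq : myM c {i} = (1 : Matrix (Fin m) (Fin m) R).updateRow i (myB c i) := by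
    ext k j
    by_cases hk : k = i
    · subst k
      rw [show (myM c {i}) i j = myB c i j from
        congrFun (myM_row_mem c (Finset.mem_singleton_self i)) j, Matrix.updateRow_self]
    · rw [Matrix.updateRow_ne hk,
        show (myM c {i}) k j = (Pi.single k 1 : Fin m → R) j from
          congrFun (myM_row_not_mem c (by simp [hk])) j]
      simp [Matrix.one_apply, Pi.single_apply, eq_comm]
  rw [heq, my_det_updateRow_one]
  simp [myB]
  ring

lemma myM_pair (c : Fin m → R) {i j : Fin m} (hij : i ≠ j) :
    (myM c {i, j}).det = (c i - c j) ^ 2 := by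
  have heq : myM c {i, j} = ((1 : Matrix (Fin m) (Fin m) R).updateRow i
      (myB c i)).updateRow j (myB c j) := by
    ext k l
    by_cases hk : k = j
    · subst k
      rw [Matrix.updateRow_self, show (myM c {i, j}) j l = myB c j l from
        congrFun (myM_row_mem c (by simp)) l]
    · rw [Matrix.updateRow_ne hk]
      by_cases hk2 : k = i
      · subst k
        rw [Matrix.updateRow_self, show (myM c {i, j}) i l = myB c i l from
          congrFun (myM_row_mem c (by simp)) l]
      · rw [Matrix.updateRow_ne hk2,
          show (myM c {i, j}) k l = (Pi.single k 1 : Fin m → R) l from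
            congrFun (myM_row_not_mem c (by simp [hk, hk2])) l]
        simp [Matrix.one_apply, Pi.single_apply, eq_comm]
  rw [heq, my_det_two_rows i j hij]
  simp [myB]
  ring

lemma myM_big (c : Fin m → R) {t : Finset (Fin m)} (ht : 3 ≤ t.card) :
    (myM c t).det = 0 := by
  obtain ⟨u, hut, hu3⟩ := Finset.exists_subset_card_eq ht
  obtain ⟨i0, i1, i2, h01, h02, h12, rfl⟩ := Finset.card_eq_three.mp hu3
  have m0 : i0 ∈ t := hut (by simp)
  have m1 : i1 ∈ t := hut (by simp)
  have m2 : i2 ∈ t := hut (by simp)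
  set N := myM c t with hN
  have r0 : N i0 = myB c i0 := myM_row_mem c m0
  have r1 : N i1 = myB c i1 := myM_row_mem c m1
  have r2 : N i2 = myB c i2 := myM_row_mem c m2
  have d1 : N.det = (N.updateRow i1 (N i1 + (-1 : R) • N i0)).det :=
    (Matrix.det_updateRow_add_smul_self N (Ne.symm h01) (-1)).symm
  have hrow1 : N i1 + (-1 : R) • N i0 = (c i1 - c i0) • c := by
    funext l
    simp [r0, r1, myB]
    ring
  rw [hrow1] at d1
  set N1 := N.updateRow i1 ((c i1 - c i0) • c) with hN1
  have r1' : N1 i2 = myB c i2 := by rw [hN1, Matrix.updateRow_ne (Ne.symm h12)]; exact r2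
  have r0' : N1 i0 = myB c i0 := by rw [hN1, Matrix.updateRow_ne h01]; exact r0
  have d2 : N1.det = (N1.updateRow i2 (N1 i2 + (-1 : R) • N1 i0)).det :=
    (Matrix.det_updateRow_add_smul_self N1 (Ne.symm h02) (-1)).symm
  have hrow2 : N1 i2 + (-1 : R) • N1 i0 = (c i2 - c i0) • c := by
    funext l
    simp [r0', r1', myB]
    ring
  rw [hrow2] at d2
  rw [d1, d2, Matrix.det_updateRow_smul, hN1,
    my_updateRow_comm N (h12 : i1 ≠ i2) _ c, Matrix.det_updateRow_smul]
  have hzero : ((N.updateRow i2 c).updateRow i1 c).det = 0 := by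
    apply Matrix.det_zero_of_row_eq h12
    rw [Matrix.updateRow_self, Matrix.updateRow_ne (Ne.symm h12), Matrix.updateRow_self]
  rw [hzero]
  ring

end mt
section pairs
open Finset

lemma my_sum_pairs {M : Type*} [AddCommMonoid M] {m : ℕ} (f : Finset (Fin m) → M) :
    ∑ t ∈ Finset.powersetCard 2 Finset.univ, f t
      = ∑ i, ∑ j ∈ Finset.Ioi i, f {i, j} := by
  have hs : ∑ i, ∑ j ∈ Finset.Ioi i, f {i, j}
      = ∑ p ∈ (Finset.univ : Finset (Fin m)).sigma (fun i => Finset.Ioi i),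
          f {p.1, p.2} := Finset.sum_sigma' _ _ _
  rw [hs]
  symm
  have hne : ∀ t ∈ Finset.powersetCard 2 (Finset.univ : Finset (Fin m)), t.Nonempty := by
    intro t ht
    rw [Finset.mem_powersetCard_univ] at ht
    exact Finset.card_pos.mp (by omega)
  refine Finset.sum_bij' (i := fun (p : Σ _ : Fin m, Fin m) _ => ({p.1, p.2} : Finset (Fin m)))
    (j := fun t ht => ⟨t.min' (hne t ht), t.max' (hne t ht)⟩) ?_ ?_ ?_ ?_ ?_
  · rintro ⟨p1, p2⟩ hp
    rw [Finset.mem_sigma] at hp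
    have hlt : p1 < p2 := Finset.mem_Ioi.mp hp.2
    rw [Finset.mem_powersetCard_univ]
    rw [Finset.card_insert_of_notMem (by simp [hlt.ne]), Finset.card_singleton]
  · intro t ht
    have h2 : t.card = 2 := Finset.mem_powersetCard_univ.mp ht
    rw [Finset.mem_sigma]
    exact ⟨Finset.mem_univ _, Finset.mem_Ioi.mpr (Finset.min'_lt_max'_of_card _ (by omega))⟩
  · rintro ⟨p1, p2⟩ hp
    rw [Finset.mem_sigma] at hp
    have hlt : p1 < p2 := Finset.mem_Ioi.mp hp.2
    have hmin : ({p1, p2} : Finset (Fin m)).min' ⟨p1, by simp⟩ = p1 := by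
      refine le_antisymm (Finset.min'_le _ _ (by simp)) (Finset.le_min' _ _ _ ?_)
      intro y hy
      rcases Finset.mem_insert.mp hy with rfl | hy
      · exact le_refl _
      · rw [Finset.mem_singleton.mp hy]; exact hlt.le
    have hmax : ({p1, p2} : Finset (Fin m)).max' ⟨p1, by simp⟩ = p2 := by
      refine le_antisymm (Finset.max'_le _ _ _ ?_) (Finset.le_max' _ _ (by simp))
      intro y hy
      rcases Finset.mem_insert.mp hy with rfl | hy
      · exact hlt.le
      · rw [Finset.mem_singleton.mp hy]
    exact Sigma.ext hmin (heq_of_eq hmax)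
  · intro t ht
    have h2 : t.card = 2 := Finset.mem_powersetCard_univ.mp ht
    have hlt : t.min' (hne t ht) < t.max' (hne t ht) :=
      Finset.min'_lt_max'_of_card _ (by omega)
    refine Finset.eq_of_subset_of_card_le ?_ ?_
    · exact Finset.insert_subset (Finset.min'_mem t (hne t ht))
        (Finset.singleton_subset_iff.mpr (Finset.max'_mem t (hne t ht)))
    · show #t ≤ #({t.min' (hne t ht), t.max' (hne t ht)} : Finset (Fin m))
      rw [h2, Finset.card_insert_of_notMem (by simp [hlt.ne]), Finset.card_singleton]
  · intro p _
    rfl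

end pairs
/-- Determinant of the matrix `D i j = λ i δ_{ij} + 1 + c i * c j`. -/
theorem stmt8 (R : Type*) [CommRing R] (m : ℕ) (hm : 1 ≤ m) (lam c : Fin m → R)
    (D : Matrix (Fin m) (Fin m) R)
    (hD : ∀ i j, D i j = (if i = j then lam i else 0) + 1 + c i * c j) :
    D.det = (∏ k, lam k)
      + (∑ i, (1 + c i ^ 2) * ∏ j ∈ Finset.univ.erase i, lam j)
      + ∑ i, ∑ j ∈ Finset.Ioi i,
          (c i - c j) ^ 2 * ∏ k ∈ (Finset.univ.erase i).erase j, lam k := by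
  classical
  set e : Fin m → Fin m → R := fun i => Pi.single i 1 with he
  set a : Fin m → Fin m → R := fun i => lam i • (Pi.single i 1 : Fin m → R) with ha
  have hDab : (D : Fin m → Fin m → R) = a + myB c := by
    funext i j
    show D i j = a i j + myB c i j
    rw [hD i j]
    by_cases h : i = j
    · subst h
      simp [a, myB, Pi.single_apply]
      ring
    · have h' : ¬ j = i := fun hh => h hh.symm
      simp [a, myB, Pi.single_apply, h, h']
  have hdet : D.det = ∑ s : Finset (Fin m), (∏ i ∈ s, lam i) * (myM c sᶜ).det := by
    have h1 : D.det = (Matrix.detRowAlternating (R := R)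
        (n := Fin m)).toMultilinearMap (a + myB c) := by
      rw [show ((Matrix.detRowAlternating (R := R) (n := Fin m)).toMultilinearMap (a + myB c))
        = Matrix.detRowAlternating (R := R) (n := Fin m) (a + myB c) from rfl, ← hDab]
      rfl
    rw [h1, MultilinearMap.map_add_univ]
    refine Finset.sum_congr rfl (fun s _ => ?_)
    have key := (Matrix.detRowAlternating (R := R)
        (n := Fin m)).toMultilinearMap.map_piecewise_smul lam (s.piecewise e (myB c)) s
    have harg : s.piecewise (fun i => lam i • (s.piecewise e (myB c)) i)
        (s.piecewise e (myB c)) = s.piecewise a (myB c) := by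
      funext i
      by_cases hi : i ∈ s
      · rw [Finset.piecewise_eq_of_mem _ _ _ hi, Finset.piecewise_eq_of_mem _ _ _ hi,
          Finset.piecewise_eq_of_mem _ _ _ hi]
      · rw [Finset.piecewise_eq_of_notMem _ _ _ hi, Finset.piecewise_eq_of_notMem _ _ _ hi,
          Finset.piecewise_eq_of_notMem _ _ _ hi]
    rw [harg] at key
    rw [key]
    have hMs : (myM c sᶜ).det = (Matrix.detRowAlternating (R := R)
        (n := Fin m)).toMultilinearMap (s.piecewise e (myB c)) := by
      unfold myM
      rw [compl_compl]
      rfl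
    rw [hMs, smul_eq_mul]
  rw [hdet]
  have hre : (∑ s : Finset (Fin m), (∏ i ∈ s, lam i) * (myM c sᶜ).det)
      = ∑ t : Finset (Fin m), (∏ i ∈ tᶜ, lam i) * (myM c t).det := by
    refine Fintype.sum_bijective (fun s : Finset (Fin m) => sᶜ)
      (Function.Involutive.bijective (fun s => compl_compl s)) _ _ (fun s => ?_)
    rw [compl_compl]
  rw [hre]
  have hcut : (∑ t : Finset (Fin m), (∏ i ∈ tᶜ, lam i) * (myM c t).det)
      = ∑ t ∈ Finset.univ.filter (fun t : Finset (Fin m) => t.card ≤ 2),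
          (∏ i ∈ tᶜ, lam i) * (myM c t).det := by
    refine (Finset.sum_subset (Finset.filter_subset _ _) (fun t _ ht => ?_)).symm
    have h3 : 3 ≤ t.card := by
      by_contra hc
      exact ht (Finset.mem_filter.mpr ⟨Finset.mem_univ t, by omega⟩)
    rw [myM_big c h3, mul_zero]
  rw [hcut]
  have hfil : Finset.univ.filter (fun t : Finset (Fin m) => t.card ≤ 2)
      = (Finset.powersetCard 0 Finset.univ ∪ Finset.powersetCard 1 Finset.univ)
        ∪ Finset.powersetCard 2 Finset.univ := by
    ext t
    simp only [Finset.mem_filter, Finset.mem_univ, true_and, Finset.mem_union,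
      Finset.mem_powersetCard_univ]
    omega
  have d01 : Disjoint (Finset.powersetCard 0 (Finset.univ : Finset (Fin m)))
      (Finset.powersetCard 1 Finset.univ) := by
    rw [Finset.disjoint_left]
    intro t h0 h1
    rw [Finset.mem_powersetCard_univ] at h0 h1
    omega
  have d012 : Disjoint (Finset.powersetCard 0 (Finset.univ : Finset (Fin m))
      ∪ Finset.powersetCard 1 Finset.univ) (Finset.powersetCard 2 Finset.univ) := by
    rw [Finset.disjoint_left]
    intro t h0 h1
    rw [Finset.mem_union, Finset.mem_powersetCard_univ, Finset.mem_powersetCard_univ] at h0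
    rw [Finset.mem_powersetCard_univ] at h1
    omega
  rw [hfil, Finset.sum_union d012, Finset.sum_union d01]
  congr 1
  · congr 1
    · -- card 0
      rw [Finset.powersetCard_zero, Finset.sum_singleton, Finset.compl_empty, myM_empty,
        mul_one]
    · -- card 1
      rw [Finset.powersetCard_one, Finset.sum_map]
      refine Finset.sum_congr rfl (fun i _ => ?_)
      show (∏ k ∈ ({i} : Finset (Fin m))ᶜ, lam k) * (myM c {i}).det = _
      rw [Finset.compl_singleton, myM_single, mul_comm]
  · -- card 2
    rw [my_sum_pairs]
    refine Finset.sum_congr rfl (fun i _ => Finset.sum_congr rfl (fun j hj => ?_))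
    have hij : i ≠ j := (Finset.mem_Ioi.mp hj).ne
    show (∏ k ∈ ({i, j} : Finset (Fin m))ᶜ, lam k) * (myM c {i, j}).det = _
    have hcompl : ({i, j} : Finset (Fin m))ᶜ = (Finset.univ.erase i).erase j := by
      ext x
      simp only [Finset.mem_compl, Finset.mem_insert, Finset.mem_singleton, Finset.mem_erase,
        Finset.mem_univ, and_true, not_or]
      tauto
    rw [hcompl, myM_pair c hij, mul_comm]
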